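/- Let T ⊆ ℝ^m be compact and P a finite nonnegative Borel measure on T. Let μ ∈ ℝ^m, Σ a real symmetric m×m matrix, ε_μ, ε_Σ ∈ ℝ, I a finite index set, ε ∈ ℝ^I, and let h : T → ℝ and gᵢ : T → ℝ (i ∈ I) be continuous. Assume P is primal feasible: the matrix ∫_T B(t) dP(t) is PSD, the matrix ε_Σ·Σ − ∫_T (t−μ)(t−μ)ᵀ dP(t) is PSD, and ∫_T gᵢ dP ≥ εᵢ for every i ∈ I. Assume (y, Y₁, Y₂) is dual feasible: y ∈ ℝ^I with yᵢ ≥ 0, Y₁ a PSD real symmetric (m+1)×(m+1) matrix, Y₂ a PSD real symmetric m×m matrix, and for every t ∈ T, h(t) − ⟨B(t), Y₁⟩_F + ⟨(t−μ)(t−μ)ᵀ, Y₂⟩_F − Σ_{i∈I} gᵢ(t)·yᵢ ≥ 0. Then ∫_T h dP ≥ Σ_{i∈I} εᵢ·yᵢ − ε_Σ·⟨Σ, Y₂⟩_F. -/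

import Mathlib

open Matrix MeasureTheory

/-- The symmetric block matrix `B(t) = [[Σ, v],[vᵀ, ε]]` of size `(m+1) × (m+1)`,
where `v = t - μ`. -/
def Bmat (m : ℕ) (S : Matrix (Fin m) (Fin m) ℝ) (v : Fin m → ℝ) (e : ℝ) :
    Matrix (Fin (m + 1)) (Fin (m + 1)) ℝ :=
  Matrix.of fun i j =>
    if hi : (i : ℕ) < m then
      if hj : (j : ℕ) < m then S ⟨i, hi⟩ ⟨j, hj⟩ else v ⟨i, hi⟩
    else if hj : (j : ℕ) < m then v ⟨j, hj⟩ else e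

/-- Diagonal entries of a real PSD matrix are nonnegative. -/
lemma psd_diag_nonneg {n : Type*} [Fintype n] [DecidableEq n]
    {M : Matrix n n ℝ} (hM : M.PosSemidef) (i : n) : 0 ≤ M i i := by
  have := hM.2 (Finsupp.single i 1)
  simpa [dotProduct, Matrix.mulVec, Pi.single_apply, Finset.sum_ite_eq,
    Finset.sum_ite_eq'] using this

/-- Trace of a real PSD matrix is nonnegative. -/
lemma psd_trace_nonneg {n : Type*} [Fintype n] [DecidableEq n]
    {M : Matrix n n ℝ} (hM : M.PosSemidef) : 0 ≤ M.trace := by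
  exact Finset.sum_nonneg fun i _ => psd_diag_nonneg hM i

/-- Frobenius inner product of two real PSD matrices is nonnegative. -/
lemma psd_inner_nonneg {n : Type*} [Fintype n] [DecidableEq n]
    {A Y : Matrix n n ℝ} (hA : A.PosSemidef) (hY : Y.PosSemidef) :
    0 ≤ (Aᵀ * Y).trace := by
  have hAt : Aᵀ = A := by
    have := hA.isHermitian.eq
    exact (Matrix.conjTranspose_eq_transpose_of_trivial A).symm.trans this
  rw [hAt]
  obtain ⟨B, hB⟩ : ∃ B : Matrix n n ℝ, Y = Bᴴ * B := by
    open scoped MatrixOrder in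
    exact ⟨CFC.sqrt Y, by
      rw [(CFC.sqrt_nonneg Y).posSemidef.isHermitian.eq, CFC.sqrt_mul_sqrt_self Y hY.nonneg]⟩
  have hpsd : ((B * A) * Bᴴ).PosSemidef := hA.mul_mul_conjTranspose_same B
  have h1 : (A * Y).trace = ((B * A) * Bᴴ).trace := by
    rw [hB, ← Matrix.mul_assoc, Matrix.trace_mul_cycle]
  rw [h1]
  exact psd_trace_nonneg hpsd

lemma trace_transpose_mul' {n : Type*} [Fintype n] (A Y : Matrix n n ℝ) :
    (Aᵀ * Y).trace = ∑ i, ∑ j, A j i * Y j i := by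
  simp [Matrix.trace, Matrix.mul_apply, Matrix.diag]

/-- weak duality: if `P` is primal feasible for the moment-constrained DRO
problem and `(y, Y₁, Y₂)` is dual feasible, then
`∫_T h dP ≥ Σᵢ εᵢ·yᵢ − ε_Σ·⟨Σ, Y₂⟩_F`. -/
theorem weak_duality_DRO
    {m : ℕ} {ι : Type} [Fintype ι]
    (T : Set (EuclideanSpace ℝ (Fin m))) (hT : IsCompact T)
    (P : Measure (EuclideanSpace ℝ (Fin m))) [IsFiniteMeasure P]
    (μ : Fin m → ℝ) (Sig : Matrix (Fin m) (Fin m) ℝ) (hSig : Sig.IsSymm)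
    (εμ εSig : ℝ) (ε : ι → ℝ)
    (h : EuclideanSpace ℝ (Fin m) → ℝ) (g : ι → EuclideanSpace ℝ (Fin m) → ℝ)
    (hh : ContinuousOn h T) (hg : ∀ i, ContinuousOn (g i) T)
    (hP1 : (Matrix.of fun i j =>
      ∫ t in T, Bmat m Sig (fun l => t l - μ l) εμ i j ∂P).PosSemidef)
    (hP2 : (εSig • Sig -
      Matrix.of fun i j => ∫ t in T, (t i - μ i) * (t j - μ j) ∂P).PosSemidef)
    (hP3 : ∀ i, ∫ t in T, g i t ∂P ≥ ε i)
    (y : ι → ℝ) (hy : ∀ i, 0 ≤ y i)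
    (Y₁ : Matrix (Fin (m + 1)) (Fin (m + 1)) ℝ) (hY₁ : Y₁.PosSemidef)
    (Y₂ : Matrix (Fin m) (Fin m) ℝ) (hY₂ : Y₂.PosSemidef)
    (hdual : ∀ t ∈ T,
      h t - ((Bmat m Sig (fun l => t l - μ l) εμ)ᵀ * Y₁).trace
        + ((Matrix.vecMulVec (fun l => t l - μ l) (fun l => t l - μ l))ᵀ * Y₂).trace
        - ∑ i, g i t * y i ≥ 0) :
    ∫ t in T, h t ∂P ≥ ∑ i, ε i * y i - εSig * (Sigᵀ * Y₂).trace := by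
  classical
  set v : EuclideanSpace ℝ (Fin m) → Fin m → ℝ := fun t l => t l - μ l with hv
  -- coordinate continuity
  have hcoord : ∀ l : Fin m, Continuous fun t : EuclideanSpace ℝ (Fin m) => t l - μ l :=
    fun l => ((EuclideanSpace.proj l).continuous).sub continuous_const
  -- continuity of entries of B
  have hBent : ∀ i j, Continuous fun t : EuclideanSpace ℝ (Fin m) =>
      Bmat m Sig (v t) εμ i j := by
    intro i j
    by_cases hi : (i : ℕ) < m
    · by_cases hj : (j : ℕ) < m
      · simpa [Bmat, hi, hj] using (continuous_const : Continuous fun _ :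
          EuclideanSpace ℝ (Fin m) => Sig ⟨i, hi⟩ ⟨j, hj⟩)
      · simpa [Bmat, hi, hj] using hcoord ⟨i, hi⟩
    · by_cases hj : (j : ℕ) < m
      · simpa [Bmat, hi, hj] using hcoord ⟨j, hj⟩
      · simpa [Bmat, hi, hj] using (continuous_const : Continuous fun _ :
          EuclideanSpace ℝ (Fin m) => εμ)
  -- the three pieces of the dual lower bound
  set S1 : EuclideanSpace ℝ (Fin m) → ℝ :=
    fun t => ∑ i, ∑ j, Bmat m Sig (v t) εμ j i * Y₁ j i with hS1
  set S2 : EuclideanSpace ℝ (Fin m) → ℝ :=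
    fun t => ∑ i, ∑ j, (v t j * v t i) * Y₂ j i with hS2
  set S3 : EuclideanSpace ℝ (Fin m) → ℝ := fun t => ∑ i, g i t * y i with hS3
  have hTm : MeasurableSet T := hT.isClosed.measurableSet
  -- integrabilities
  have hint_h : IntegrableOn h T P := hh.integrableOn_compact hT
  have hint_B : ∀ j i, IntegrableOn (fun t => Bmat m Sig (v t) εμ j i * Y₁ j i) T P :=
    fun j i => ((hBent j i).continuousOn.integrableOn_compact hT).mul_const _
  have hint_S1 : IntegrableOn S1 T P := by
    apply integrable_finset_sum _ fun i _ => integrable_finset_sum _ fun j _ => hint_B j i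
  have hint_vv : ∀ j i, IntegrableOn (fun t => (v t j * v t i) * Y₂ j i) T P :=
    fun j i => ((((hcoord j).mul (hcoord i)).continuousOn).integrableOn_compact hT).mul_const _
  have hint_S2 : IntegrableOn S2 T P := by
    apply integrable_finset_sum _ fun i _ => integrable_finset_sum _ fun j _ => hint_vv j i
  have hint_g : ∀ i, IntegrableOn (fun t => g i t * y i) T P :=
    fun i => ((hg i).integrableOn_compact hT).mul_const _
  have hint_S3 : IntegrableOn S3 T P := integrable_finset_sum _ fun i _ => hint_g i
  have hint_F : IntegrableOn (fun t => S1 t - S2 t + S3 t) T P :=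
    (hint_S1.sub hint_S2).add hint_S3
  -- step 1 : pointwise bound and monotonicity of integral
  have step1 : ∫ t in T, S1 t - S2 t + S3 t ∂P ≤ ∫ t in T, h t ∂P := by
    apply setIntegral_mono_on hint_F hint_h hTm
    intro t ht
    have hd := hdual t ht
    have e1 : ((Bmat m Sig (v t) εμ)ᵀ * Y₁).trace = S1 t := trace_transpose_mul' _ _
    have e2 : ((Matrix.vecMulVec (v t) (v t))ᵀ * Y₂).trace = S2 t := by
      rw [trace_transpose_mul']
      simp [Matrix.vecMulVec_apply, hS2]
    rw [e1, e2] at hd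
    simp only [hS3, hv] at *
    linarith
  -- step 2 : compute integrals of S1, S2, S3
  have hIS1 : ∫ t in T, S1 t ∂P =
      ∑ i, ∑ j, (∫ t in T, Bmat m Sig (v t) εμ j i ∂P) * Y₁ j i := by
    rw [integral_finset_sum _ fun i _ => integrable_finset_sum _ fun j _ => hint_B j i]
    refine Finset.sum_congr rfl fun i _ => ?_
    rw [integral_finset_sum _ fun j _ => hint_B j i]
    exact Finset.sum_congr rfl fun j _ => integral_mul_const _ _
  have hIS2 : ∫ t in T, S2 t ∂P =
      ∑ i, ∑ j, (∫ t in T, v t j * v t i ∂P) * Y₂ j i := by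
    rw [integral_finset_sum _ fun i _ => integrable_finset_sum _ fun j _ => hint_vv j i]
    refine Finset.sum_congr rfl fun i _ => ?_
    rw [integral_finset_sum _ fun j _ => hint_vv j i]
    exact Finset.sum_congr rfl fun j _ => integral_mul_const _ _
  have hIS3 : ∫ t in T, S3 t ∂P = ∑ i, (∫ t in T, g i t ∂P) * y i := by
    rw [integral_finset_sum _ fun i _ => hint_g i]
    exact Finset.sum_congr rfl fun i _ => integral_mul_const _ _
  have hIF : ∫ t in T, S1 t - S2 t + S3 t ∂P =
      (∫ t in T, S1 t ∂P) - (∫ t in T, S2 t ∂P) + ∫ t in T, S3 t ∂P := by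
    have hsub : IntegrableOn (fun t => S1 t - S2 t) T P := hint_S1.sub hint_S2
    rw [integral_add hsub hint_S3, integral_sub hint_S1 hint_S2]
  -- step 3 : ∫ S1 ≥ 0
  have h31 : (0:ℝ) ≤ ∫ t in T, S1 t ∂P := by
    rw [hIS1]
    have hnn := psd_inner_nonneg hP1 hY₁
    rw [trace_transpose_mul'] at hnn
    simpa [Matrix.of_apply, hv] using hnn
  -- step 4 : ∫ S2 ≤ εSig * ⟨Σ, Y₂⟩
  set M : Matrix (Fin m) (Fin m) ℝ :=
    Matrix.of fun i j => ∫ t in T, (t i - μ i) * (t j - μ j) ∂P with hM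
  have h42 : ∫ t in T, S2 t ∂P = (Mᵀ * Y₂).trace := by
    rw [hIS2, trace_transpose_mul']
    refine Finset.sum_congr rfl fun i _ => Finset.sum_congr rfl fun j _ => ?_
    simp [hM, hv]
  have h43 : (Mᵀ * Y₂).trace ≤ εSig * (Sigᵀ * Y₂).trace := by
    have := psd_inner_nonneg hP2 hY₂
    rw [Matrix.transpose_sub, Matrix.sub_mul, Matrix.trace_sub,
      Matrix.transpose_smul, Matrix.smul_mul, Matrix.trace_smul] at this
    simpa [smul_eq_mul] using sub_nonneg.mp this
  have h4 : ∫ t in T, S2 t ∂P ≤ εSig * (Sigᵀ * Y₂).trace := h42 ▸ h43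
  -- step 5 : ∫ S3 ≥ ∑ εᵢ yᵢ
  have h5 : ∑ i, ε i * y i ≤ ∫ t in T, S3 t ∂P := by
    rw [hIS3]
    exact Finset.sum_le_sum fun i _ => mul_le_mul_of_nonneg_right (hP3 i) (hy i)
  -- combine
  have := step1
  rw [hIF] at this
  linarith
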